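/- On ℝ⁴ with the ART metric g = −dt² + sinh²(t/a) dx² + cosh²(t/a) dy² + dz² (a ≠ 0, on a region where sinh(t/a) ≠ 0), the vector field ξ = sin(y/a) cosh(x/a) ∂_t − coth(t/a) sin(y/a) sinh(x/a) ∂_x + tanh(t/a) cos(y/a) cosh(x/a) ∂_y is a Killing vector field: 𝓛_ξ g = 0. -/

import Mathlib

open scoped BigOperators
open Real

noncomputable section

variable {ι : Type*} [Fintype ι] [DecidableEq ι]

/-- Partial derivative of a function on coordinate space along the `i`-th coordinate. -/
def pd (f : (ι → ℝ) → ℝ) (i : ι) (x : ι → ℝ) : ℝ :=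
  fderiv ℝ f x (Pi.single i 1)

/-- Christoffel symbols `Γ^k_{ij}` of a metric `g` with inverse `ginv`, in coordinates. -/
def Christoffel (g ginv : (ι → ℝ) → Matrix ι ι ℝ) (k i j : ι) (x : ι → ℝ) : ℝ :=
  (1 / 2) * ∑ l, ginv x k l *
    (pd (fun y => g y l i) j x + pd (fun y => g y l j) i x - pd (fun y => g y i j) l x)

/-- Riemann curvature tensor `R^a_{bcd}` in coordinates. -/
def RiemannUp (g ginv : (ι → ℝ) → Matrix ι ι ℝ) (a b c d : ι) (x : ι → ℝ) : ℝ :=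
  pd (Christoffel g ginv a d b) c x - pd (Christoffel g ginv a c b) d x
    + ∑ e, Christoffel g ginv a c e x * Christoffel g ginv e d b x
    - ∑ e, Christoffel g ginv a d e x * Christoffel g ginv e c b x

/-- Fully covariant Riemann tensor `R_{abcd}`. -/
def RiemannLow (g ginv : (ι → ℝ) → Matrix ι ι ℝ) (a b c d : ι) (x : ι → ℝ) : ℝ :=
  ∑ e, g x a e * RiemannUp g ginv e b c d x

/-- Ricci tensor `R_{bd}`. -/
def RicciT (g ginv : (ι → ℝ) → Matrix ι ι ℝ) (b d : ι) (x : ι → ℝ) : ℝ :=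
  ∑ a, RiemannUp g ginv a b a d x

/-- Scalar curvature. -/
def ScalarCurv (g ginv : (ι → ℝ) → Matrix ι ι ℝ) (x : ι → ℝ) : ℝ :=
  ∑ b, ∑ d, ginv x b d * RicciT g ginv b d x

/-- Lie derivative of the metric `g` along the vector field `X`, in coordinates:
`(𝓛_X g)_{ab} = X^c ∂_c g_{ab} + g_{cb} ∂_a X^c + g_{ac} ∂_b X^c`. -/
def lieD (g : (ι → ℝ) → Matrix ι ι ℝ) (X : (ι → ℝ) → ι → ℝ) (x : ι → ℝ) :
    Matrix ι ι ℝ :=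
  Matrix.of fun a b =>
    (∑ c, X x c * pd (fun y => g y a b) c x)
      + (∑ c, g x c b * pd (fun y => X y c) a x)
      + (∑ c, g x a c * pd (fun y => X y c) b x)

/-- Covariant Hessian `f_{;ab} = ∂_a ∂_b f − Γ^c_{ab} ∂_c f`. -/
def covHess (g ginv : (ι → ℝ) → Matrix ι ι ℝ) (f : (ι → ℝ) → ℝ) (a b : ι)
    (x : ι → ℝ) : ℝ :=
  pd (pd f b) a x - ∑ c, Christoffel g ginv c a b x * pd f c x

end

section ARTHelpers

open Real

lemma pd_const (c : ℝ) (i : Fin 4) (x : Fin 4 → ℝ) : pd (fun _ => c) i x = 0 := by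
  simp [pd]

lemma pd1 {h : ℝ → ℝ} {d : ℝ} {j : Fin 4} {x : Fin 4 → ℝ} (i : Fin 4)
    (hd : HasDerivAt h d (x j)) :
    pd (fun y => h (y j)) i x = if i = j then d else 0 := by
  have hproj : HasFDerivAt (fun y : Fin 4 → ℝ => y j)
      (ContinuousLinearMap.proj j : (Fin 4 → ℝ) →L[ℝ] ℝ) x :=
    hasFDerivAt_apply (𝕜 := ℝ) j x
  have h2 : HasFDerivAt (fun y : Fin 4 → ℝ => h (y j)) (d • ContinuousLinearMap.proj j) x :=
    hd.comp_hasFDerivAt x hproj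
  rw [pd, h2.fderiv]
  simp only [ContinuousLinearMap.smul_apply, ContinuousLinearMap.proj_apply,
    Pi.single_apply, smul_eq_mul]
  rcases eq_or_ne i j with h | h
  · simp [h]
  · simp [h, h.symm]

lemma hdiff1 {h : ℝ → ℝ} {d : ℝ} {j : Fin 4} {x : Fin 4 → ℝ}
    (hd : HasDerivAt h d (x j)) :
    DifferentiableAt ℝ (fun y : Fin 4 → ℝ => h (y j)) x :=
  (hd.comp_hasFDerivAt x (hasFDerivAt_apply (𝕜 := ℝ) j x) :
    HasFDerivAt _ (_ : (Fin 4 → ℝ) →L[ℝ] ℝ) x).differentiableAt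

lemma pd_mul {f g : (Fin 4 → ℝ) → ℝ} {i : Fin 4} {x : Fin 4 → ℝ}
    (hf : DifferentiableAt ℝ f x) (hg : DifferentiableAt ℝ g x) :
    pd (fun y => f y * g y) i x = pd f i x * g x + f x * pd g i x := by
  simp only [pd, fderiv_fun_mul hf hg, ContinuousLinearMap.add_apply,
    ContinuousLinearMap.smul_apply, smul_eq_mul]
  ring

lemma pd2 {f g : ℝ → ℝ} {df dg : ℝ} {j k : Fin 4} {x : Fin 4 → ℝ} (i : Fin 4)
    (hf : HasDerivAt f df (x j)) (hg : HasDerivAt g dg (x k)) :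
    pd (fun y => f (y j) * g (y k)) i x
      = (if i = j then df else 0) * g (x k) + f (x j) * (if i = k then dg else 0) := by
  rw [pd_mul (hdiff1 hf) (hdiff1 hg), pd1 i hf, pd1 i hg]

lemma pd3 {f g h : ℝ → ℝ} {df dg dh : ℝ} {j k l : Fin 4} {x : Fin 4 → ℝ} (i : Fin 4)
    (hf : HasDerivAt f df (x j)) (hg : HasDerivAt g dg (x k)) (hh : HasDerivAt h dh (x l)) :
    pd (fun y => f (y j) * g (y k) * h (y l)) i x
      = ((if i = j then df else 0) * g (x k) + f (x j) * (if i = k then dg else 0)) * h (x l)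
        + f (x j) * g (x k) * (if i = l then dh else 0) := by
  rw [pd_mul ((hdiff1 hf).fun_mul (hdiff1 hg)) (hdiff1 hh), pd2 i hf hg, pd1 i hh]

lemma pd_neg (f : (Fin 4 → ℝ) → ℝ) (i : Fin 4) (x : Fin 4 → ℝ) :
    pd (fun y => -(f y)) i x = -pd f i x := by
  simp [pd, fderiv_neg]


end ARTHelpers

set_option maxHeartbeats 4000000 in
/-- On the ART spacetime `g = −dt² + sinh²(t/a) dx² + cosh²(t/a) dy² + dz²`
(`a ≠ 0`), on the region `sinh(t/a) ≠ 0`, the vector field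
`ξ = sin(y/a) cosh(x/a) ∂_t − coth(t/a) sin(y/a) sinh(x/a) ∂_x
  + tanh(t/a) cos(y/a) cosh(x/a) ∂_y` is a Killing vector field. -/
theorem ART_killing (a : ℝ) (ha : a ≠ 0)
    (g : (Fin 4 → ℝ) → Matrix (Fin 4) (Fin 4) ℝ)
    (hg : g = fun p => Matrix.diagonal
      ![-1, (Real.sinh (p 0 / a)) ^ 2, (Real.cosh (p 0 / a)) ^ 2, 1])
    (ξ : (Fin 4 → ℝ) → Fin 4 → ℝ)
    (hξ : ξ = fun p =>
      ![Real.sin (p 2 / a) * Real.cosh (p 1 / a),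
        -(Real.cosh (p 0 / a) / Real.sinh (p 0 / a)) *
          Real.sin (p 2 / a) * Real.sinh (p 1 / a),
        Real.tanh (p 0 / a) * Real.cos (p 2 / a) * Real.cosh (p 1 / a),
        0]) :
    ∀ p : Fin 4 → ℝ, Real.sinh (p 0 / a) ≠ 0 → lieD g ξ p = 0 := by
  subst hg hξ
  intro p hp
  have hc0 : Real.cosh (p 0 / a) ≠ 0 := (Real.cosh_pos _).ne'
  have hdiv : ∀ w : ℝ, HasDerivAt (fun r : ℝ => r / a) (1 / a) w := fun w =>
    (hasDerivAt_id w).div_const a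
  have hsinh : ∀ w : ℝ, HasDerivAt (fun r : ℝ => Real.sinh (r / a))
      (Real.cosh (w / a) * (1 / a)) w := fun w =>
    (Real.hasDerivAt_sinh (w / a)).comp (h₂ := Real.sinh) w (hdiv w)
  have hcosh : ∀ w : ℝ, HasDerivAt (fun r : ℝ => Real.cosh (r / a))
      (Real.sinh (w / a) * (1 / a)) w := fun w =>
    (Real.hasDerivAt_cosh (w / a)).comp (h₂ := Real.cosh) w (hdiv w)
  have hsin : ∀ w : ℝ, HasDerivAt (fun r : ℝ => Real.sin (r / a))
      (Real.cos (w / a) * (1 / a)) w := fun w =>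
    (Real.hasDerivAt_sin (w / a)).comp (h₂ := Real.sin) w (hdiv w)
  have hcos : ∀ w : ℝ, HasDerivAt (fun r : ℝ => Real.cos (r / a))
      (-Real.sin (w / a) * (1 / a)) w := fun w =>
    (Real.hasDerivAt_cos (w / a)).comp (h₂ := Real.cos) w (hdiv w)
  have hs2 : HasDerivAt (fun r : ℝ => Real.sinh (r / a) ^ 2)
      (2 * Real.sinh (p 0 / a) * Real.cosh (p 0 / a) / a) (p 0) := by
    have h := (hsinh (p 0)).fun_pow 2
    refine h.congr_deriv ?_
    push_cast
    ring
  have hc2 : HasDerivAt (fun r : ℝ => Real.cosh (r / a) ^ 2)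
      (2 * Real.sinh (p 0 / a) * Real.cosh (p 0 / a) / a) (p 0) := by
    have h := (hcosh (p 0)).fun_pow 2
    refine h.congr_deriv ?_
    push_cast
    ring
  have hcoth : HasDerivAt (fun r : ℝ => Real.cosh (r / a) / Real.sinh (r / a))
      (-(1 / (a * Real.sinh (p 0 / a) ^ 2))) (p 0) := by
    have h := (hcosh (p 0)).fun_div (hsinh (p 0)) hp
    refine h.congr_deriv ?_
    have hid := Real.cosh_sq_sub_sinh_sq (p 0 / a)
    field_simp
    nlinarith [hid]
  have htanh : HasDerivAt (fun r : ℝ => Real.tanh (r / a))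
      (1 / (a * Real.cosh (p 0 / a) ^ 2)) (p 0) := by
    have e : (fun r : ℝ => Real.tanh (r / a))
        = fun r : ℝ => Real.sinh (r / a) / Real.cosh (r / a) := by
      funext r; exact Real.tanh_eq_sinh_div_cosh _
    rw [e]
    have h := (hsinh (p 0)).fun_div (hcosh (p 0)) hc0
    refine h.congr_deriv ?_
    have hid := Real.cosh_sq_sub_sinh_sq (p 0 / a)
    field_simp
    nlinarith [hid]
  have d11 : ∀ i : Fin 4, pd (fun y : Fin 4 → ℝ => Real.sinh (y 0 / a) ^ 2) i p
      = if i = 0 then 2 * Real.sinh (p 0 / a) * Real.cosh (p 0 / a) / a else 0 :=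
    fun i => pd1 i hs2
  have d22 : ∀ i : Fin 4, pd (fun y : Fin 4 → ℝ => Real.cosh (y 0 / a) ^ 2) i p
      = if i = 0 then 2 * Real.sinh (p 0 / a) * Real.cosh (p 0 / a) / a else 0 :=
    fun i => pd1 i hc2
  have dx0 : ∀ i : Fin 4,
      pd (fun y : Fin 4 → ℝ => Real.sin (y 2 / a) * Real.cosh (y 1 / a)) i p
      = (if i = 2 then Real.cos (p 2 / a) * (1 / a) else 0) * Real.cosh (p 1 / a)
        + Real.sin (p 2 / a) * (if i = 1 then Real.sinh (p 1 / a) * (1 / a) else 0) :=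
    fun i => pd2 i (hsin (p 2)) (hcosh (p 1))
  have dx1 : ∀ i : Fin 4,
      pd (fun y : Fin 4 → ℝ => -(Real.cosh (y 0 / a) / Real.sinh (y 0 / a)
          * Real.sin (y 2 / a) * Real.sinh (y 1 / a))) i p
      = -(((if i = 0 then -(1 / (a * Real.sinh (p 0 / a) ^ 2)) else 0) * Real.sin (p 2 / a)
          + Real.cosh (p 0 / a) / Real.sinh (p 0 / a)
            * (if i = 2 then Real.cos (p 2 / a) * (1 / a) else 0)) * Real.sinh (p 1 / a)
        + Real.cosh (p 0 / a) / Real.sinh (p 0 / a) * Real.sin (p 2 / a)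
            * (if i = 1 then Real.cosh (p 1 / a) * (1 / a) else 0)) := by
    intro i
    rw [pd_neg, pd3 i hcoth (hsin (p 2)) (hsinh (p 1))]
  have dx2 : ∀ i : Fin 4,
      pd (fun y : Fin 4 → ℝ => Real.tanh (y 0 / a)
          * Real.cos (y 2 / a) * Real.cosh (y 1 / a)) i p
      = ((if i = 0 then 1 / (a * Real.cosh (p 0 / a) ^ 2) else 0) * Real.cos (p 2 / a)
          + Real.tanh (p 0 / a) * (if i = 2 then -Real.sin (p 2 / a) * (1 / a) else 0))
            * Real.cosh (p 1 / a)
        + Real.tanh (p 0 / a) * Real.cos (p 2 / a)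
            * (if i = 1 then Real.sinh (p 1 / a) * (1 / a) else 0) :=
    fun i => pd3 i htanh (hcos (p 2)) (hcosh (p 1))
  ext i j
  fin_cases i <;> fin_cases j
  all_goals simp [lieD, Fin.sum_univ_four, Matrix.diagonal_apply]
  all_goals try simp only [d11, d22, dx0, dx1, dx2, pd_const]
  all_goals try simp (config := { decide := true })
  all_goals try simp [Real.tanh_eq_sinh_div_cosh]
  all_goals
    set s := Real.sinh (p 0 / a) with hS
    set c := Real.cosh (p 0 / a) with hC
    set S1 := Real.sinh (p 1 / a) with hS1
    set C1 := Real.cosh (p 1 / a) with hC1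
    set σ := Real.sin (p 2 / a) with hσ
    set γ := Real.cos (p 2 / a) with hγ
  all_goals try field_simp
  all_goals try ring
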